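/- arXiv:2101.00544 — 2 statements merged into one kernel-verified Lean document; each statement's English description precedes it below -/
import Mathlib

section
/- (Crapo's quadrilateral arrangement is non-very generic.) Let Q₁, Q₂, Q₃, Q₄ ∈ ℝ² be four points, no three of which are collinear, and let f₁,…,f₆ be linear functionals on ℝ², every two of which are linearly independent, satisfying f₁(Q₂−Q₁) = 0, f₂(Q₃−Q₁) = 0, f₃(Q₄−Q₁) = 0, f₄(Q₃−Q₂) = 0, f₅(Q₄−Q₂) = 0, f₆(Q₄−Q₃) = 0 (so the six central lines ker fᵢ are parallel to the six sides and diagonals of the quadrilateral Q₁Q₂Q₃Q₄). Let L₁ = {1,2,3}, L₂ = {1,4,5}, L₃ = {2,4,6}, L₄ = {3,5,6}. Then D_{L₁} ∩ D_{L₂} ∩ D_{L₃} ⊆ D_{L₄}, and consequently X = D_{L₁} ∩ D_{L₂} ∩ D_{L₃} ∩ D_{L₄} is a linear subspace of ℝ⁶ of codimension 3 (rank 3, strictly less than its multiplicity 4). -/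
noncomputable section

/-- `D f S` : translations `t ∈ ℝⁿ` for which the translated lines/hyperplanes
`Hᵢ^{tᵢ} = {x : fᵢ(x) = tᵢ}`, `i ∈ S`, have a common point. -/
def D {n k : ℕ} (f : Fin n → ((Fin k → ℝ) →ₗ[ℝ] ℝ)) (S : Finset (Fin n)) :
    Set (Fin n → ℝ) :=
  {t | ∃ x : Fin k → ℝ, ∀ i ∈ S, f i x = t i}




private lemma lin_apply (g : (Fin 2 → ℝ) →ₗ[ℝ] ℝ) (x : Fin 2 → ℝ) :
    g x = x 0 * g ![1, 0] + x 1 * g ![0, 1] := by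
  have hx : g x = g (x 0 • ![(1:ℝ), 0] + x 1 • ![(0:ℝ), 1]) := by
    congr 1
    funext j
    fin_cases j <;> simp
  rw [hx, map_add, map_smul, map_smul, smul_eq_mul, smul_eq_mul]

private lemma det_ne (g h : (Fin 2 → ℝ) →ₗ[ℝ] ℝ)
    (hgh : LinearIndependent ℝ ![g, h]) :
    g ![1, 0] * h ![0, 1] - h ![1, 0] * g ![0, 1] ≠ 0 := by
  intro hdet
  rw [sub_eq_zero] at hdet
  rw [LinearIndependent.pair_iff] at hgh
  have e1 : h ![0, 1] • g + (-(g ![0, 1])) • h = 0 := by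
    refine LinearMap.ext fun x => ?_
    simp only [LinearMap.add_apply, LinearMap.smul_apply, LinearMap.zero_apply, smul_eq_mul]
    rw [lin_apply g x, lin_apply h x]
    linear_combination x 0 * hdet
  have e2 : h ![1, 0] • g + (-(g ![1, 0])) • h = 0 := by
    refine LinearMap.ext fun x => ?_
    simp only [LinearMap.add_apply, LinearMap.smul_apply, LinearMap.zero_apply, smul_eq_mul]
    rw [lin_apply g x, lin_apply h x]
    linear_combination (-(x 1)) * hdet
  obtain ⟨hb1, hb2⟩ := hgh _ _ e1
  obtain ⟨ha1, ha2⟩ := hgh _ _ e2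
  have hg0 : g = 0 := by
    refine LinearMap.ext fun x => ?_
    rw [lin_apply g x]
    rw [neg_eq_zero] at hb2 ha2
    simp [hb2, ha2]
  obtain ⟨h10, -⟩ := hgh 1 0 (by rw [hg0]; simp)
  exact one_ne_zero h10

private lemma exists_alpha (p q x y : ℝ) (h : p * x + q * y = 0)
    (hpq : p ≠ 0 ∨ q ≠ 0) : ∃ α : ℝ, x = -(α * q) ∧ y = α * p := by
  rcases hpq with hp | hq
  · refine ⟨y / p, ?_, by field_simp⟩
    field_simp
    linear_combination h
  · refine ⟨-x / q, ?_, ?_⟩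
    · field_simp
    · field_simp
      linear_combination h

private lemma memD_iff (f : Fin 6 → ((Fin 2 → ℝ) →ₗ[ℝ] ℝ)) (i j k : Fin 6)
    (t : Fin 6 → ℝ)
    (hd : f i ![1, 0] * f j ![0, 1] - f j ![1, 0] * f i ![0, 1] ≠ 0) :
    t ∈ D f {i, j, k} ↔
      (f j ![1, 0] * f k ![0, 1] - f k ![1, 0] * f j ![0, 1]) * t i
      - (f i ![1, 0] * f k ![0, 1] - f k ![1, 0] * f i ![0, 1]) * t j
      + (f i ![1, 0] * f j ![0, 1] - f j ![1, 0] * f i ![0, 1]) * t k = 0 := by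
  constructor
  · rintro ⟨x, hx⟩
    have hi := hx i (by simp)
    have hj := hx j (by simp)
    have hk := hx k (by simp)
    rw [lin_apply] at hi hj hk
    linear_combination -((f j ![1, 0] * f k ![0, 1] - f k ![1, 0] * f j ![0, 1]) * hi)
      + (f i ![1, 0] * f k ![0, 1] - f k ![1, 0] * f i ![0, 1]) * hj
      - (f i ![1, 0] * f j ![0, 1] - f j ![1, 0] * f i ![0, 1]) * hk
  · intro ht
    refine ⟨![(t i * f j ![0, 1] - t j * f i ![0, 1])
        / (f i ![1, 0] * f j ![0, 1] - f j ![1, 0] * f i ![0, 1]),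
      (f i ![1, 0] * t j - f j ![1, 0] * t i)
        / (f i ![1, 0] * f j ![0, 1] - f j ![1, 0] * f i ![0, 1])], ?_⟩
    intro l hl
    have hl' : l = i ∨ l = j ∨ l = k := by simpa using hl
    rw [lin_apply]
    simp only [Matrix.cons_val_zero, Matrix.cons_val_one, Matrix.head_cons]
    have hd' : f j ![0, 1] * f i ![1, 0] - f i ![0, 1] * f j ![1, 0] ≠ 0 := by
      contrapose! hd; linarith
    rcases hl' with rfl | rfl | rfl
    · field_simp
      ring
    · field_simp
      ring
    · field_simp
      linear_combination -ht

private noncomputable def gfun (c0 c1 c2 : ℝ) (i0 i1 i2 : Fin 6) :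
    (Fin 6 → ℝ) →ₗ[ℝ] ℝ :=
  c0 • LinearMap.proj i0 - c1 • LinearMap.proj i1 + c2 • LinearMap.proj i2

private lemma gfun_apply (c0 c1 c2 : ℝ) (i0 i1 i2 : Fin 6) (t : Fin 6 → ℝ) :
    gfun c0 c1 c2 i0 i1 i2 t = c0 * t i0 - c1 * t i1 + c2 * t i2 := by
  simp [gfun]


/-- Theorem (Crapo's quadrilateral arrangement is non-very generic): for four
points `Q₁,…,Q₄ ∈ ℝ²`, no three collinear, and six pairwise independent linear
functionals whose kernels are parallel to the sides and diagonals of the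
quadrilateral, with `L₁ = {1,2,3}`, `L₂ = {1,4,5}`, `L₃ = {2,4,6}`,
`L₄ = {3,5,6}` (here 0-indexed), one has
`D_{L₁} ∩ D_{L₂} ∩ D_{L₃} ⊆ D_{L₄}` and the simple intersection
`X = D_{L₁} ∩ D_{L₂} ∩ D_{L₃} ∩ D_{L₄}` is a linear subspace of `ℝ⁶` of
codimension 3, strictly less than its multiplicity 4. -/
theorem crapo_nonVeryGeneric (Q : Fin 4 → (Fin 2 → ℝ))
    (hQ : ∀ i j l : Fin 4, i ≠ j → i ≠ l → j ≠ l →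
      ¬ Collinear ℝ ({Q i, Q j, Q l} : Set (Fin 2 → ℝ)))
    (f : Fin 6 → ((Fin 2 → ℝ) →ₗ[ℝ] ℝ))
    (hf : ∀ i j : Fin 6, i ≠ j → LinearIndependent ℝ ![f i, f j])
    (h1 : f 0 (Q 1 - Q 0) = 0) (h2 : f 1 (Q 2 - Q 0) = 0)
    (h3 : f 2 (Q 3 - Q 0) = 0) (h4 : f 3 (Q 2 - Q 1) = 0)
    (h5 : f 4 (Q 3 - Q 1) = 0) (h6 : f 5 (Q 3 - Q 2) = 0) :
    D f {0, 1, 2} ∩ D f {0, 3, 4} ∩ D f {1, 3, 5} ⊆ D f {2, 4, 5} ∧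
    ∃ W : Submodule ℝ (Fin 6 → ℝ),
      (W : Set (Fin 6 → ℝ)) =
        D f {0, 1, 2} ∩ D f {0, 3, 4} ∩ D f {1, 3, 5} ∩ D f {2, 4, 5} ∧
      6 - Module.finrank ℝ W = 3 := by
  have hne : ∀ i j : Fin 4, i ≠ j → Q i ≠ Q j := by
    intro i j hij he
    obtain ⟨l, hl1, hl2⟩ : ∃ l : Fin 4, i ≠ l ∧ j ≠ l := by
      fin_cases i <;> fin_cases j <;> decide
    apply hQ i j l hij hl1 hl2
    rw [he, Set.insert_idem]
    exact collinear_pair ℝ _ _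
  have hvec : ∀ a b : Fin 4, a ≠ b →
      (Q b 0 - Q a 0 ≠ 0 ∨ Q b 1 - Q a 1 ≠ 0) := by
    intro a b hab
    by_contra hcon
    push_neg at hcon
    apply hne a b hab
    have e0 : Q a 0 = Q b 0 := by linarith [hcon.1]
    have e1 : Q a 1 = Q b 1 := by linarith [hcon.2]
    funext l
    fin_cases l
    · exact e0
    · exact e1
  have c0 : (Q 1 0 - Q 0 0) * f 0 ![1, 0] + (Q 1 1 - Q 0 1) * f 0 ![0, 1] = 0 := by
    rw [lin_apply] at h1
    simpa [Pi.sub_apply] using h1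
  obtain ⟨α0, hA0, hB0⟩ := exists_alpha _ _ _ _ c0 (hvec 0 1 (by decide))
  have c1 : (Q 2 0 - Q 0 0) * f 1 ![1, 0] + (Q 2 1 - Q 0 1) * f 1 ![0, 1] = 0 := by
    rw [lin_apply] at h2
    simpa [Pi.sub_apply] using h2
  obtain ⟨α1, hA1, hB1⟩ := exists_alpha _ _ _ _ c1 (hvec 0 2 (by decide))
  have c2 : (Q 3 0 - Q 0 0) * f 2 ![1, 0] + (Q 3 1 - Q 0 1) * f 2 ![0, 1] = 0 := by
    rw [lin_apply] at h3
    simpa [Pi.sub_apply] using h3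
  obtain ⟨α2, hA2, hB2⟩ := exists_alpha _ _ _ _ c2 (hvec 0 3 (by decide))
  have c3 : (Q 2 0 - Q 1 0) * f 3 ![1, 0] + (Q 2 1 - Q 1 1) * f 3 ![0, 1] = 0 := by
    rw [lin_apply] at h4
    simpa [Pi.sub_apply] using h4
  obtain ⟨α3, hA3, hB3⟩ := exists_alpha _ _ _ _ c3 (hvec 1 2 (by decide))
  have c4 : (Q 3 0 - Q 1 0) * f 4 ![1, 0] + (Q 3 1 - Q 1 1) * f 4 ![0, 1] = 0 := by
    rw [lin_apply] at h5
    simpa [Pi.sub_apply] using h5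
  obtain ⟨α4, hA4, hB4⟩ := exists_alpha _ _ _ _ c4 (hvec 1 3 (by decide))
  have c5 : (Q 3 0 - Q 2 0) * f 5 ![1, 0] + (Q 3 1 - Q 2 1) * f 5 ![0, 1] = 0 := by
    rw [lin_apply] at h6
    simpa [Pi.sub_apply] using h6
  obtain ⟨α5, hA5, hB5⟩ := exists_alpha _ _ _ _ c5 (hvec 2 3 (by decide))
  have hd01 := det_ne (f 0) (f 1) (hf 0 1 (by decide))
  have hd03 := det_ne (f 0) (f 3) (hf 0 3 (by decide))
  have hd13 := det_ne (f 1) (f 3) (hf 1 3 (by decide))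
  have hd24 := det_ne (f 2) (f 4) (hf 2 4 (by decide))
  have I1 : (f 0 ![1, 0] * f 3 ![0, 1] - f 3 ![1, 0] * f 0 ![0, 1]) * (f 4 ![1, 0] * f 5 ![0, 1] - f 5 ![1, 0] * f 4 ![0, 1]) * (f 1 ![1, 0] * f 2 ![0, 1] - f 2 ![1, 0] * f 1 ![0, 1]) = (f 0 ![1, 0] * f 1 ![0, 1] - f 1 ![1, 0] * f 0 ![0, 1]) * (f 2 ![1, 0] * f 5 ![0, 1] - f 5 ![1, 0] * f 2 ![0, 1]) * (f 3 ![1, 0] * f 4 ![0, 1] - f 4 ![1, 0] * f 3 ![0, 1]) := by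
    rw [hA0, hB0, hA1, hB1, hA2, hB2, hA3, hB3, hA4, hB4, hA5, hB5]
    ring
  have I2 : (f 1 ![1, 0] * f 3 ![0, 1] - f 3 ![1, 0] * f 1 ![0, 1]) * (f 4 ![1, 0] * f 5 ![0, 1] - f 5 ![1, 0] * f 4 ![0, 1]) * (f 0 ![1, 0] * f 2 ![0, 1] - f 2 ![1, 0] * f 0 ![0, 1]) = (f 0 ![1, 0] * f 1 ![0, 1] - f 1 ![1, 0] * f 0 ![0, 1]) * (f 2 ![1, 0] * f 4 ![0, 1] - f 4 ![1, 0] * f 2 ![0, 1]) * (f 3 ![1, 0] * f 5 ![0, 1] - f 5 ![1, 0] * f 3 ![0, 1]) := by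
    rw [hA0, hB0, hA1, hB1, hA2, hB2, hA3, hB3, hA4, hB4, hA5, hB5]
    ring
  have I3 : (f 1 ![1, 0] * f 3 ![0, 1] - f 3 ![1, 0] * f 1 ![0, 1]) * (f 2 ![1, 0] * f 5 ![0, 1] - f 5 ![1, 0] * f 2 ![0, 1]) * (f 0 ![1, 0] * f 4 ![0, 1] - f 4 ![1, 0] * f 0 ![0, 1]) = (f 0 ![1, 0] * f 3 ![0, 1] - f 3 ![1, 0] * f 0 ![0, 1]) * (f 2 ![1, 0] * f 4 ![0, 1] - f 4 ![1, 0] * f 2 ![0, 1]) * (f 1 ![1, 0] * f 5 ![0, 1] - f 5 ![1, 0] * f 1 ![0, 1]) := by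
    rw [hA0, hB0, hA1, hB1, hA2, hB2, hA3, hB3, hA4, hB4, hA5, hB5]
    ring
  have hincl : D f {0, 1, 2} ∩ D f {0, 3, 4} ∩ D f {1, 3, 5} ⊆ D f {2, 4, 5} := by
    rintro t ⟨⟨m1, m2⟩, m3⟩
    rw [memD_iff f 0 1 2 t hd01] at m1
    rw [memD_iff f 0 3 4 t hd03] at m2
    rw [memD_iff f 1 3 5 t hd13] at m3
    rw [memD_iff f 2 4 5 t hd24]
    apply mul_left_cancel₀ (mul_ne_zero (mul_ne_zero hd01 hd03) hd13)
    linear_combination ((f 0 ![1, 0] * f 3 ![0, 1] - f 3 ![1, 0] * f 0 ![0, 1]) * (f 1 ![1, 0] * f 3 ![0, 1] - f 3 ![1, 0] * f 1 ![0, 1]) * (f 4 ![1, 0] * f 5 ![0, 1] - f 5 ![1, 0] * f 4 ![0, 1])) * m1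
      - ((f 0 ![1, 0] * f 1 ![0, 1] - f 1 ![1, 0] * f 0 ![0, 1]) * (f 1 ![1, 0] * f 3 ![0, 1] - f 3 ![1, 0] * f 1 ![0, 1]) * (f 2 ![1, 0] * f 5 ![0, 1] - f 5 ![1, 0] * f 2 ![0, 1])) * m2
      + ((f 0 ![1, 0] * f 1 ![0, 1] - f 1 ![1, 0] * f 0 ![0, 1]) * (f 0 ![1, 0] * f 3 ![0, 1] - f 3 ![1, 0] * f 0 ![0, 1]) * (f 2 ![1, 0] * f 4 ![0, 1] - f 4 ![1, 0] * f 2 ![0, 1])) * m3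
      - ((f 1 ![1, 0] * f 3 ![0, 1] - f 3 ![1, 0] * f 1 ![0, 1]) * t 0) * I1
      + ((f 0 ![1, 0] * f 3 ![0, 1] - f 3 ![1, 0] * f 0 ![0, 1]) * t 1) * I2
      - ((f 0 ![1, 0] * f 1 ![0, 1] - f 1 ![1, 0] * f 0 ![0, 1]) * t 3) * I3
  refine ⟨hincl, LinearMap.ker (LinearMap.pi ![gfun (f 1 ![1, 0] * f 2 ![0, 1] - f 2 ![1, 0] * f 1 ![0, 1]) (f 0 ![1, 0] * f 2 ![0, 1] - f 2 ![1, 0] * f 0 ![0, 1]) (f 0 ![1, 0] * f 1 ![0, 1] - f 1 ![1, 0] * f 0 ![0, 1]) 0 1 2, gfun (f 3 ![1, 0] * f 4 ![0, 1] - f 4 ![1, 0] * f 3 ![0, 1]) (f 0 ![1, 0] * f 4 ![0, 1] - f 4 ![1, 0] * f 0 ![0, 1]) (f 0 ![1, 0] * f 3 ![0, 1] - f 3 ![1, 0] * f 0 ![0, 1]) 0 3 4, gfun (f 3 ![1, 0] * f 5 ![0, 1] - f 5 ![1, 0] * f 3 ![0, 1]) (f 1 ![1, 0] * f 5 ![0,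 1] - f 5 ![1, 0] * f 1 ![0, 1]) (f 1 ![1, 0] * f 3 ![0, 1] - f 3 ![1, 0] * f 1 ![0, 1]) 1 3 5]), ?_, ?_⟩
  · ext t
    constructor
    · intro htk
      simp only [SetLike.mem_coe, LinearMap.mem_ker] at htk
      have e1 : (f 1 ![1, 0] * f 2 ![0, 1] - f 2 ![1, 0] * f 1 ![0, 1]) * t 0 - (f 0 ![1, 0] * f 2 ![0, 1] - f 2 ![1, 0] * f 0 ![0, 1]) * t 1 + (f 0 ![1, 0] * f 1 ![0, 1] - f 1 ![1, 0] * f 0 ![0, 1]) * t 2 = 0 := congrFun htk 0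
      have e2 : (f 3 ![1, 0] * f 4 ![0, 1] - f 4 ![1, 0] * f 3 ![0, 1]) * t 0 - (f 0 ![1, 0] * f 4 ![0, 1] - f 4 ![1, 0] * f 0 ![0, 1]) * t 3 + (f 0 ![1, 0] * f 3 ![0, 1] - f 3 ![1, 0] * f 0 ![0, 1]) * t 4 = 0 := congrFun htk 1
      have e3 : (f 3 ![1, 0] * f 5 ![0, 1] - f 5 ![1, 0] * f 3 ![0, 1]) * t 1 - (f 1 ![1, 0] * f 5 ![0, 1] - f 5 ![1, 0] * f 1 ![0, 1]) * t 3 + (f 1 ![1, 0] * f 3 ![0, 1] - f 3 ![1, 0] * f 1 ![0, 1]) * t 5 = 0 := congrFun htk 2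
      have m1 := (memD_iff f 0 1 2 t hd01).2 e1
      have m2 := (memD_iff f 0 3 4 t hd03).2 e2
      have m3 := (memD_iff f 1 3 5 t hd13).2 e3
      exact ⟨⟨⟨m1, m2⟩, m3⟩, hincl ⟨⟨m1, m2⟩, m3⟩⟩
    · rintro ⟨⟨⟨m1, m2⟩, m3⟩, -⟩
      simp only [SetLike.mem_coe, LinearMap.mem_ker]
      rw [memD_iff f 0 1 2 t hd01] at m1
      rw [memD_iff f 0 3 4 t hd03] at m2
      rw [memD_iff f 1 3 5 t hd13] at m3
      funext i
      fin_cases i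
      · exact m1
      · exact m2
      · exact m3
  · have hsurj : Function.Surjective (LinearMap.pi ![gfun (f 1 ![1, 0] * f 2 ![0, 1] - f 2 ![1, 0] * f 1 ![0, 1]) (f 0 ![1, 0] * f 2 ![0, 1] - f 2 ![1, 0] * f 0 ![0, 1]) (f 0 ![1, 0] * f 1 ![0, 1] - f 1 ![1, 0] * f 0 ![0, 1]) 0 1 2, gfun (f 3 ![1, 0] * f 4 ![0, 1] - f 4 ![1, 0] * f 3 ![0, 1]) (f 0 ![1, 0] * f 4 ![0, 1] - f 4 ![1, 0] * f 0 ![0, 1]) (f 0 ![1, 0] * f 3 ![0, 1] - f 3 ![1, 0] * f 0 ![0, 1]) 0 3 4, gfun (f 3 ![1, 0] * f 5 ![0, 1] - f 5 ![1, 0] * f 3 ![0, 1]) (f 1 ![1, 0] * f 5 ![0, 1] - f 5 ![1, 0] * f 1 ![0, 1]) (f 1 ![1, 0] * f 3 ![0, 1] - f 3 ![1, 0] * f 1 ![0, 1]) 1 3 5]) := by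
      intro c
      refine ⟨![0, 0, c 0 / (f 0 ![1, 0] * f 1 ![0, 1] - f 1 ![1, 0] * f 0 ![0, 1]), 0, c 1 / (f 0 ![1, 0] * f 3 ![0, 1] - f 3 ![1, 0] * f 0 ![0, 1]), c 2 / (f 1 ![1, 0] * f 3 ![0, 1] - f 3 ![1, 0] * f 1 ![0, 1])], ?_⟩
      funext i
      fin_cases i
      · show (f 1 ![1, 0] * f 2 ![0, 1] - f 2 ![1, 0] * f 1 ![0, 1]) * (0:ℝ) - (f 0 ![1, 0] * f 2 ![0, 1] - f 2 ![1, 0] * f 0 ![0, 1]) * (0:ℝ) + (f 0 ![1, 0] * f 1 ![0, 1] - f 1 ![1, 0] * f 0 ![0, 1]) * (c 0 / (f 0 ![1, 0] * f 1 ![0, 1] - f 1 ![1, 0] * f 0 ![0, 1])) = c 0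
        rw [mul_zero, mul_zero, sub_zero, zero_add, mul_div_cancel₀ _ hd01]
      · show (f 3 ![1, 0] * f 4 ![0, 1] - f 4 ![1, 0] * f 3 ![0, 1]) * (0:ℝ) - (f 0 ![1, 0] * f 4 ![0, 1] - f 4 ![1, 0] * f 0 ![0, 1]) * (0:ℝ) + (f 0 ![1, 0] * f 3 ![0, 1] - f 3 ![1, 0] * f 0 ![0, 1]) * (c 1 / (f 0 ![1, 0] * f 3 ![0, 1] - f 3 ![1, 0] * f 0 ![0, 1])) = c 1
        rw [mul_zero, mul_zero, sub_zero, zero_add, mul_div_cancel₀ _ hd03]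
      · show (f 3 ![1, 0] * f 5 ![0, 1] - f 5 ![1, 0] * f 3 ![0, 1]) * (0:ℝ) - (f 1 ![1, 0] * f 5 ![0, 1] - f 5 ![1, 0] * f 1 ![0, 1]) * (0:ℝ) + (f 1 ![1, 0] * f 3 ![0, 1] - f 3 ![1, 0] * f 1 ![0, 1]) * (c 2 / (f 1 ![1, 0] * f 3 ![0, 1] - f 3 ![1, 0] * f 1 ![0, 1])) = c 2
        rw [mul_zero, mul_zero, sub_zero, zero_add, mul_div_cancel₀ _ hd13]
    have hr := LinearMap.finrank_range_add_finrank_ker (LinearMap.pi ![gfun (f 1 ![1, 0] * f 2 ![0, 1] - f 2 ![1, 0] * f 1 ![0, 1]) (f 0 ![1, 0] * f 2 ![0, 1] - f 2 ![1, 0] * f 0 ![0, 1]) (f 0 ![1, 0] * f 1 ![0, 1] - f 1 ![1, 0] * f 0 ![0, 1]) 0 1 2, gfun (f 3 ![1, 0] * f 4 ![0, 1] - f 4 ![1, 0] * f 3 ![0, 1]) (f 0 ![1, 0] * f 4 ![0, 1] - f 4 ![1, 0] * f 0 ![0, 1]) (f 0 ![1, 0] * f 3 ![0, 1] - f 3 ![1,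 0] * f 0 ![0, 1]) 0 3 4, gfun (f 3 ![1, 0] * f 5 ![0, 1] - f 5 ![1, 0] * f 3 ![0, 1]) (f 1 ![1, 0] * f 5 ![0, 1] - f 5 ![1, 0] * f 1 ![0, 1]) (f 1 ![1, 0] * f 3 ![0, 1] - f 3 ![1, 0] * f 1 ![0, 1]) 1 3 5])
    rw [LinearMap.range_eq_top.mpr hsurj, finrank_top, Module.finrank_fin_fun,
      Module.finrank_fin_fun] at hr
    omega
end
end

section
/- (Falk's arrangement is non-very generic.) Let f₁,…,f₆ be linear functionals on ℝ³, every three of which are linearly independent, such that the three lines ker f₁ ∩ ker f₂, ker f₃ ∩ ker f₄, and ker f₅ ∩ ker f₆ are all contained in a common 2-dimensional linear subspace of ℝ³ (equivalently, the traces at infinity of the planes satisfy that the three points H̄ᵢ ∩ H̄_{i+1} ∩ H_∞, i = 1,3,5, lie on a line at infinity). Let L₁ = {1,2,3,4}, L₂ = {1,2,5,6}, L₃ = {3,4,5,6}. Then D_{L₁} ∩ D_{L₂} ⊆ D_{L₃}, and consequently X = D_{L₁} ∩ D_{L₂} ∩ D_{L₃} is a linear subspace of ℝ⁶ of codimension 2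 (rank 2, strictly less than its multiplicity 3). -/
noncomputable section

private lemma li3 {f : Fin 6 → ((Fin 3 → ℝ) →ₗ[ℝ] ℝ)}
    (hf : ∀ S : Finset (Fin 6), S.card = 3 →
      LinearIndependent ℝ (fun i : S => f (i : Fin 6)))
    {i j k : Fin 6} (hij : i ≠ j) (hik : i ≠ k) (hjk : j ≠ k) :
    LinearIndependent ℝ ![f i, f j, f k] := by
  have hS : ({i, j, k} : Finset (Fin 6)).card = 3 := by
    rw [Finset.card_insert_of_notMem (by simp [hij, hik]),
        Finset.card_insert_of_notMem (by simp [hjk]), Finset.card_singleton]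
  have h := hf {i, j, k} hS
  have hmi : i ∈ ({i,j,k} : Finset (Fin 6)) := by simp
  have hmj : j ∈ ({i,j,k} : Finset (Fin 6)) := by simp
  have hmk : k ∈ ({i,j,k} : Finset (Fin 6)) := by simp
  have h2 := h.comp (![⟨i, hmi⟩, ⟨j, hmj⟩, ⟨k, hmk⟩] :
      Fin 3 → ({i,j,k} : Finset (Fin 6)))
    (by intro a b hab; fin_cases a <;> fin_cases b <;> simp_all)
  convert h2 using 1
  ext x
  fin_cases x <;> rfl

private lemma tz {f : Fin 6 → ((Fin 3 → ℝ) →ₗ[ℝ] ℝ)}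
    (hf : ∀ S : Finset (Fin 6), S.card = 3 →
      LinearIndependent ℝ (fun i : S => f (i : Fin 6)))
    {i j k : Fin 6} (hij : i ≠ j) (hik : i ≠ k) (hjk : j ≠ k)
    (a b c : ℝ) (h : a • f i + b • f j + c • f k = 0) :
    a = 0 ∧ b = 0 ∧ c = 0 := by
  have hli := li3 hf hij hik hjk
  rw [Fintype.linearIndependent_iff] at hli
  have h3 := hli ![a, b, c] (by simpa [Fin.sum_univ_three] using h)
  exact ⟨h3 0, h3 1, h3 2⟩

private lemma solve3 {f : Fin 6 → ((Fin 3 → ℝ) →ₗ[ℝ] ℝ)}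
    (hf : ∀ S : Finset (Fin 6), S.card = 3 →
      LinearIndependent ℝ (fun i : S => f (i : Fin 6)))
    {i j k : Fin 6} (hij : i ≠ j) (hik : i ≠ k) (hjk : j ≠ k)
    (c0 c1 c2 : ℝ) :
    ∃ x : Fin 3 → ℝ, f i x = c0 ∧ f j x = c1 ∧ f k x = c2 := by
  set F : (Fin 3 → ℝ) →ₗ[ℝ] (Fin 3 → ℝ) :=
    LinearMap.pi (fun m : Fin 3 => ![f i, f j, f k] m) with hF
  have hspan : Submodule.span ℝ (Set.range ![f i, f j, f k]) = ⊤ :=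
    (li3 hf hij hik hjk).span_eq_top_of_card_eq_finrank
      (by simp [Subspace.dual_finrank_eq (V := Fin 3 → ℝ),
        Module.finrank_fin_fun])
  have hinj : Function.Injective F := by
    rw [← LinearMap.ker_eq_bot, Submodule.eq_bot_iff]
    intro x hx
    rw [LinearMap.mem_ker] at hx
    have hall : ∀ φ : Module.Dual ℝ (Fin 3 → ℝ), φ x = 0 := by
      intro φ
      have hφ : φ ∈ Submodule.span ℝ (Set.range ![f i, f j, f k]) := by
        rw [hspan]; trivial
      induction hφ using Submodule.span_induction with
      | mem ψ hψ =>
        obtain ⟨m, rfl⟩ := hψ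
        simpa [hF, LinearMap.pi_apply] using congrFun hx m
      | zero => simp
      | add _ _ _ _ h1 h2 => simp [h1, h2]
      | smul c _ _ h1 => simp [h1]
    exact (Module.forall_dual_apply_eq_zero_iff ℝ x).mp hall
  obtain ⟨x, hx⟩ := LinearMap.injective_iff_surjective.mp hinj ![c0, c1, c2]
  refine ⟨x, ?_, ?_, ?_⟩
  · simpa [hF, LinearMap.pi_apply] using congrFun hx 0
  · simpa [hF, LinearMap.pi_apply] using congrFun hx 1
  · simpa [hF, LinearMap.pi_apply] using congrFun hx 2

set_option maxHeartbeats 1000000 in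
/-- Theorem (Falk's arrangement is non-very generic): for six linear functionals
on `ℝ³`, every three linearly independent, such that the three lines
`ker f₁ ∩ ker f₂`, `ker f₃ ∩ ker f₄`, `ker f₅ ∩ ker f₆` lie in a common
2-dimensional subspace, with `L₁ = {1,2,3,4}`, `L₂ = {1,2,5,6}`,
`L₃ = {3,4,5,6}` (here 0-indexed) one has `D_{L₁} ∩ D_{L₂} ⊆ D_{L₃}`, and the
simple intersection `X = D_{L₁} ∩ D_{L₂} ∩ D_{L₃}` is a linear subspace of `ℝ⁶`
of codimension 2, strictly less than its multiplicity 3. -/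
theorem falk_nonVeryGeneric (f : Fin 6 → ((Fin 3 → ℝ) →ₗ[ℝ] ℝ))
    (hf : ∀ S : Finset (Fin 6), S.card = 3 →
      LinearIndependent ℝ (fun i : S => f (i : Fin 6)))
    (hdep : ∃ W : Submodule ℝ (Fin 3 → ℝ), Module.finrank ℝ W = 2 ∧
      LinearMap.ker (f 0) ⊓ LinearMap.ker (f 1) ≤ W ∧
      LinearMap.ker (f 2) ⊓ LinearMap.ker (f 3) ≤ W ∧
      LinearMap.ker (f 4) ⊓ LinearMap.ker (f 5) ≤ W) :
    D f {0, 1, 2, 3} ∩ D f {0, 1, 4, 5} ⊆ D f {2, 3, 4, 5} ∧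
    ∃ X : Submodule ℝ (Fin 6 → ℝ),
      (X : Set (Fin 6 → ℝ)) =
        D f {0, 1, 2, 3} ∩ D f {0, 1, 4, 5} ∩ D f {2, 3, 4, 5} ∧
      6 - Module.finrank ℝ X = 2 := by
  obtain ⟨W, hW2, h01, h23, h45⟩ := hdep
  -- construct a nonzero functional g with kernel W
  have hdim3 : Module.finrank ℝ (Fin 3 → ℝ) = 3 := Module.finrank_fin_fun ℝ
  have hWq : Module.finrank ℝ ((Fin 3 → ℝ) ⧸ W) = 1 := by
    have h := Submodule.finrank_quotient_add_finrank W
    rw [hW2, hdim3] at h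
    omega
  obtain ⟨e⟩ := FiniteDimensional.nonempty_linearEquiv_of_finrank_eq
    (hWq.trans (Module.finrank_self ℝ).symm)
  set g : (Fin 3 → ℝ) →ₗ[ℝ] ℝ := e.toLinearMap ∘ₗ W.mkQ with hgdef
  have hkerg : LinearMap.ker g = W := by
    rw [hgdef, LinearMap.ker_comp, LinearEquiv.ker, Submodule.comap_bot,
      Submodule.ker_mkQ]
  have hgne : g ≠ 0 := by
    intro h
    have hWtop : W = ⊤ := by rw [← hkerg, h, LinearMap.ker_zero]
    rw [hWtop] at hW2
    rw [finrank_top, hdim3] at hW2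
    omega
  -- coefficients for the three pairs
  have pairRep : ∀ i j m : Fin 6, i ≠ j → i ≠ m → j ≠ m →
      LinearMap.ker (f i) ⊓ LinearMap.ker (f j) ≤ W →
      ∃ a b : ℝ, ∀ x, g x = a * f i x + b * f j x := by
    intro i j m hij him hjm hle
    obtain ⟨u, hu1, hu2, -⟩ := solve3 hf hij him hjm 1 0 0
    obtain ⟨v, hv1, hv2, -⟩ := solve3 hf hij him hjm 0 1 0
    refine ⟨g u, g v, fun x => ?_⟩
    have hmem : x - f i x • u - f j x • v ∈
        LinearMap.ker (f i) ⊓ LinearMap.ker (f j) := by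
      constructor <;>
        simp [LinearMap.mem_ker, map_sub, map_smul, hu1, hu2, hv1, hv2]
    have hmem2 : x - f i x • u - f j x • v ∈ LinearMap.ker g := hkerg ▸ hle hmem
    rw [LinearMap.mem_ker, map_sub, map_sub, map_smul, map_smul,
      smul_eq_mul, smul_eq_mul] at hmem2
    linarith
  obtain ⟨a0, a1, hg01⟩ := pairRep 0 1 2 (by decide) (by decide) (by decide) h01
  obtain ⟨a2, a3, hg23⟩ := pairRep 2 3 0 (by decide) (by decide) (by decide) h23
  obtain ⟨a4, a5, hg45⟩ := pairRep 4 5 0 (by decide) (by decide) (by decide) h45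
  have hg01' : ∀ x, g x = a1 * f 1 x + a0 * f 0 x := fun x => by
    rw [hg01 x]; ring
  have hg23' : ∀ x, g x = a3 * f 3 x + a2 * f 2 x := fun x => by
    rw [hg23 x]; ring
  have hg45' : ∀ x, g x = a5 * f 5 x + a4 * f 4 x := fun x => by
    rw [hg45 x]; ring
  -- nonvanishing of coefficients
  have nz : ∀ (i j k l : Fin 6) (ai aj ak al : ℝ), j ≠ k → j ≠ l → k ≠ l →
      (∀ x, g x = ai * f i x + aj * f j x) →
      (∀ x, g x = ak * f k x + al * f l x) → ai ≠ 0 := by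
    intro i j k l ai aj ak al hjk hjl hkl h1 h2 hai0
    have h0 : aj • f j + (-ak) • f k + (-al) • f l = 0 := by
      refine LinearMap.ext fun x => ?_
      have e1 := h1 x
      have e2 := h2 x
      rw [hai0, zero_mul, zero_add] at e1
      simp only [LinearMap.add_apply, LinearMap.smul_apply, smul_eq_mul,
        LinearMap.zero_apply, neg_mul]
      linarith
    obtain ⟨hj0, -, -⟩ := tz hf hjk hjl hkl _ _ _ h0
    apply hgne
    refine LinearMap.ext fun x => ?_
    have e1 := h1 x
    rw [hai0, hj0, zero_mul, zero_mul, zero_add] at e1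
    simpa using e1
  have ha2 : a2 ≠ 0 := nz 2 3 0 1 a2 a3 a0 a1 (by decide) (by decide) (by decide) hg23 hg01
  have ha3 : a3 ≠ 0 := nz 3 2 0 1 a3 a2 a0 a1 (by decide) (by decide) (by decide) hg23' hg01
  have ha4 : a4 ≠ 0 := nz 4 5 0 1 a4 a5 a0 a1 (by decide) (by decide) (by decide) hg45 hg01
  have ha5 : a5 ≠ 0 := nz 5 4 0 1 a5 a4 a0 a1 (by decide) (by decide) (by decide) hg45' hg01
  -- characterization of the D sets
  have Dchar : ∀ (i j k l : Fin 6) (ai aj ak al : ℝ), i ≠ j → i ≠ k → j ≠ k →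
      al ≠ 0 →
      (∀ x, g x = ai * f i x + aj * f j x) →
      (∀ x, g x = ak * f k x + al * f l x) →
      ∀ t : Fin 6 → ℝ,
        t ∈ D f {i, j, k, l} ↔ ai * t i + aj * t j = ak * t k + al * t l := by
    intro i j k l ai aj ak al hij hik hjk hal h1 h2 t
    constructor
    · rintro ⟨x, hx⟩
      have hi := hx i (by simp)
      have hj := hx j (by simp)
      have hk := hx k (by simp)
      have hl := hx l (by simp)
      have e1 := h1 x
      have e2 := h2 x
      rw [hi, hj] at e1
      rw [hk, hl] at e2
      linarith
    · intro ht
      obtain ⟨x, hxi, hxj, hxk⟩ := solve3 hf hij hik hjk (t i) (t j) (t k)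
      have hxl : f l x = t l := by
        have e1 := h1 x
        have e2 := h2 x
        rw [hxi, hxj] at e1
        rw [hxk] at e2
        have hcl : al * f l x = al * t l := by linarith
        exact mul_left_cancel₀ hal hcl
      refine ⟨x, fun m hm => ?_⟩
      simp only [Finset.mem_insert, Finset.mem_singleton] at hm
      rcases hm with rfl | rfl | rfl | rfl <;> assumption
  have hD1 := Dchar 0 1 2 3 a0 a1 a2 a3 (by decide) (by decide) (by decide) ha3 hg01 hg23
  have hD2 := Dchar 0 1 4 5 a0 a1 a4 a5 (by decide) (by decide) (by decide) ha5 hg01 hg45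
  have hD3 := Dchar 2 3 4 5 a2 a3 a4 a5 (by decide) (by decide) (by decide) ha5 hg23 hg45
  constructor
  · intro t ht
    rw [hD3 t]
    have h1 := (hD1 t).mp ht.1
    have h2 := (hD2 t).mp ht.2
    linarith
  -- the subspace X
  · set u : (Fin 6 → ℝ) →ₗ[ℝ] ℝ :=
      a0 • LinearMap.proj 0 + a1 • LinearMap.proj 1
        - a2 • LinearMap.proj 2 - a3 • LinearMap.proj 3 with hu
    set v : (Fin 6 → ℝ) →ₗ[ℝ] ℝ :=
      a0 • LinearMap.proj 0 + a1 • LinearMap.proj 1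
        - a4 • LinearMap.proj 4 - a5 • LinearMap.proj 5 with hv
    set ψ : (Fin 6 → ℝ) →ₗ[ℝ] ℝ × ℝ := u.prod v with hψ
    have hue : ∀ t : Fin 6 → ℝ, u t = a0 * t 0 + a1 * t 1 - a2 * t 2 - a3 * t 3 := by
      intro t
      simp [hu, LinearMap.proj_apply]
    have hve : ∀ t : Fin 6 → ℝ, v t = a0 * t 0 + a1 * t 1 - a4 * t 4 - a5 * t 5 := by
      intro t
      simp [hv, LinearMap.proj_apply]
    refine ⟨LinearMap.ker ψ, ?_, ?_⟩
    · ext t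
      simp only [SetLike.mem_coe, LinearMap.mem_ker, hψ, LinearMap.prod_apply,
        Function.prod, Prod.mk_eq_zero, Set.mem_inter_iff]
      rw [hD1 t, hD2 t, hD3 t, hue t, hve t]
      constructor
      · rintro ⟨e1, e2⟩
        refine ⟨⟨by linarith, by linarith⟩, by linarith⟩
      · rintro ⟨⟨e1, e2⟩, e3⟩
        exact ⟨by linarith, by linarith⟩
    · have hsurj : Function.Surjective ψ := by
        rintro ⟨p, q⟩
        refine ⟨fun m => if m = 2 then -p / a2 else if m = 4 then -q / a4 else 0, ?_⟩
        have hψe : ∀ t : Fin 6 → ℝ, ψ t = (u t, v t) := fun t => rfl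
        rw [hψe, hue, hve, Prod.ext_iff]
        simp only [show ((0:Fin 6) = 2) = False from eq_false (by decide),
          show ((1:Fin 6) = 2) = False from eq_false (by decide),
          show ((3:Fin 6) = 2) = False from eq_false (by decide),
          show ((4:Fin 6) = 2) = False from eq_false (by decide),
          show ((5:Fin 6) = 2) = False from eq_false (by decide),
          show ((0:Fin 6) = 4) = False from eq_false (by decide),
          show ((1:Fin 6) = 4) = False from eq_false (by decide),
          show ((3:Fin 6) = 4) = False from eq_false (by decide),
          show ((5:Fin 6) = 4) = False from eq_false (by decide),
          show ((2:Fin 6) = 2) = True from eq_true rfl,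
          show ((4:Fin 6) = 4) = True from eq_true rfl,
          if_true, if_false]
        constructor
        · field_simp; ring
        · field_simp; ring
      have hrank := LinearMap.finrank_range_add_finrank_ker ψ
      rw [LinearMap.range_eq_top.mpr hsurj] at hrank
      rw [finrank_top, Module.finrank_prod, Module.finrank_self,
        Module.finrank_fin_fun] at hrank
      omega
end
end
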